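/- Let 0 < λ < 1, ζ ∈ 𝕋, and let φ : 𝔻 → 𝔻 be holomorphic such that lim_{r→1⁻} φ(rζ) = w for some w ∈ 𝔻 and lim_{r→1⁻} (1−r)|φ′(rζ)| = 0. Put f_ζ(z) = (1−\bar{ζ}z)^{−(1−λ)/2}. Then limsup_{r→1⁻} (1−r)^{(3−λ)/2} |f_ζ′(φ(rζ)) φ′(rζ) − f_ζ′(rζ)| ≥ (1−λ)/2; hence ‖f_ζ∘φ − f_ζ‖_{B^{(3−λ)/2}} ≥ (1−λ)/2. -/

import Mathlib

open Complex Set Filter Metric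

noncomputable section

/-- The (extended-real-valued) Bloch-type norm ‖g‖_{B^α}. -/
def blochNormE (α : ℝ) (g : ℂ → ℂ) : ENNReal :=
  ENNReal.ofReal ‖g 0‖ +
    ⨆ z ∈ ball (0:ℂ) 1, ENNReal.ofReal ((1 - ‖z‖ ^ 2) ^ α * ‖deriv g z‖)

/-- If the holomorphic self-map φ of 𝔻 has radial limit w ∈ 𝔻 at ζ ∈ 𝕋 and
(1−r)|φ′(rζ)| → 0, then for f_ζ(z) = (1−\bar{ζ}z)^{−(1−λ)/2},
limsup_{r→1⁻}(1−r)^{(3−λ)/2}|f_ζ′(φ(rζ))φ′(rζ) − f_ζ′(rζ)| ≥ (1−λ)/2, so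
‖f_ζ∘φ − f_ζ‖_{B^{(3−λ)/2}} ≥ (1−λ)/2. -/
theorem bloch_lower_bound_interior_limit
    (lam : ℝ) (hlam0 : 0 < lam) (hlam1 : lam < 1)
    (ζ : ℂ) (hζ : ‖ζ‖ = 1)
    (φ : ℂ → ℂ) (hφhol : DifferentiableOn ℂ φ (ball (0:ℂ) 1))
    (hφmaps : MapsTo φ (ball (0:ℂ) 1) (ball (0:ℂ) 1))
    (w : ℂ) (hw : w ∈ ball (0:ℂ) 1)
    (hlim : Tendsto (fun r : ℝ => φ ((r : ℂ) * ζ)) (nhdsWithin 1 (Iio 1)) (nhds w))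
    (hder : Tendsto (fun r : ℝ => (1 - r) * ‖deriv φ ((r : ℂ) * ζ)‖)
      (nhdsWithin 1 (Iio 1)) (nhds 0))
    (fζ : ℂ → ℂ)
    (hfζ : fζ = fun z => (1 - (starRingEnd ℂ) ζ * z) ^ (-((1 : ℂ) - (lam : ℂ)) / 2)) :
    (∀ ε > 0, ∃ᶠ r : ℝ in nhdsWithin 1 (Iio 1),
      (1 - lam) / 2 - ε < (1 - r) ^ ((3 - lam) / 2) *
        ‖deriv fζ (φ ((r : ℂ) * ζ)) * deriv φ ((r : ℂ) * ζ) - deriv fζ ((r : ℂ) * ζ)‖) ∧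
    ENNReal.ofReal ((1 - lam) / 2) ≤ blochNormE ((3 - lam) / 2) (fζ ∘ φ - fζ) := by
  set c : ℂ := -((1 : ℂ) - (lam : ℂ)) / 2 with hc
  set p : ℝ := (3 - lam) / 2 with hp
  set q : ℝ := (1 - lam) / 2 with hq
  set l : Filter ℝ := nhdsWithin 1 (Iio 1) with hl
  have hq0 : 0 < q := by rw [hq]; linarith
  have hp0 : 0 < p := by rw [hp]; linarith
  -- ζ̄ ζ = 1
  have hζζ : (starRingEnd ℂ) ζ * ζ = 1 := by
    rw [Complex.conj_mul', hζ]; norm_num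
  have hray : ∀ r : ℝ, (1 : ℂ) - (starRingEnd ℂ) ζ * ((r : ℂ) * ζ) = ((1 - r : ℝ) : ℂ) := by
    intro r
    have h1 : (starRingEnd ℂ) ζ * ((r : ℂ) * ζ) = (r : ℂ) * ((starRingEnd ℂ) ζ * ζ) := by ring
    rw [h1, hζζ, mul_one]; push_cast; ring
  -- slit plane facts
  have hslit : ∀ z : ℂ, ‖z‖ < 1 →
      (1 - (starRingEnd ℂ) ζ * z) ∈ Complex.slitPlane := by
    intro z hz
    rw [Complex.mem_slitPlane_iff]
    left
    have h1 : ((starRingEnd ℂ) ζ * z).re ≤ ‖(starRingEnd ℂ) ζ * z‖ :=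
      Complex.re_le_norm _
    have h2 : ‖(starRingEnd ℂ) ζ * z‖ = ‖z‖ := by
      rw [norm_mul, RCLike.norm_conj, hζ, one_mul]
    have h3 : (1 - (starRingEnd ℂ) ζ * z).re = 1 - ((starRingEnd ℂ) ζ * z).re := by
      simp [Complex.sub_re]
    rw [h3]; rw [h2] at h1; linarith
  -- derivative of fζ
  have hD : ∀ z : ℂ, (1 - (starRingEnd ℂ) ζ * z) ∈ Complex.slitPlane →
      HasDerivAt fζ (c * (1 - (starRingEnd ℂ) ζ * z) ^ (c - 1) * (-(starRingEnd ℂ) ζ)) z := by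
    intro z hz
    have h1 : HasDerivAt (fun z : ℂ => 1 - (starRingEnd ℂ) ζ * z) (-(starRingEnd ℂ) ζ) z := by
      simpa using ((hasDerivAt_id z).const_mul ((starRingEnd ℂ) ζ)).const_sub 1
    rw [hfζ]
    exact h1.cpow_const hz
  have hball : ∀ r : ℝ, r ∈ Ioo (0:ℝ) 1 → (r : ℂ) * ζ ∈ ball (0:ℂ) 1 := by
    intro r hr
    rw [mem_ball_zero_iff, norm_mul, Complex.norm_real, hζ, mul_one, Real.norm_eq_abs,
      abs_of_pos hr.1]
    exact hr.2
  have hslitr : ∀ r : ℝ, r < 1 →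
      (1 - (starRingEnd ℂ) ζ * ((r : ℂ) * ζ)) ∈ Complex.slitPlane := by
    intro r hr
    rw [hray, Complex.mem_slitPlane_iff]
    left
    simpa using (by linarith : (0:ℝ) < 1 - r)
  have hdf : ∀ r : ℝ, r < 1 →
      deriv fζ ((r : ℂ) * ζ) = c * ((1 - r : ℝ) : ℂ) ^ (c - 1) * (-(starRingEnd ℂ) ζ) := by
    intro r hr
    have := (hD _ (hslitr r hr)).deriv
    rw [this, hray]
  have hc1 : c - 1 = (((lam - 3) / 2 : ℝ) : ℂ) := by rw [hc]; push_cast; ring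
  -- cancellation: (1-r)^p • deriv fζ (rζ) = c * (-ζ̄)
  have hcan : ∀ r : ℝ, r ∈ Ioo (0:ℝ) 1 →
      (((1 - r) ^ p : ℝ) : ℂ) * (c * ((1 - r : ℝ) : ℂ) ^ (c - 1) * (-(starRingEnd ℂ) ζ)) =
        c * (-(starRingEnd ℂ) ζ) := by
    intro r hr
    have h0 : (0:ℝ) < 1 - r := by linarith [hr.2]
    have h1 : (((1 - r) ^ p : ℝ) : ℂ) * ((1 - r : ℝ) : ℂ) ^ (c - 1) = 1 := by
      rw [hc1, ← Complex.ofReal_cpow h0.le, ← Complex.ofReal_mul, ← Real.rpow_add h0]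
      have : p + (lam - 3) / 2 = 0 := by rw [hp]; ring
      rw [this, Real.rpow_zero, Complex.ofReal_one]
    calc (((1 - r) ^ p : ℝ) : ℂ) * (c * ((1 - r : ℝ) : ℂ) ^ (c - 1) * (-(starRingEnd ℂ) ζ))
        = ((((1 - r) ^ p : ℝ) : ℂ) * ((1 - r : ℝ) : ℂ) ^ (c - 1)) * (c * (-(starRingEnd ℂ) ζ)) := by
          ring
      _ = c * (-(starRingEnd ℂ) ζ) := by rw [h1, one_mul]
  set K : ℂ := c * (-(starRingEnd ℂ) ζ) with hK
  have hKnorm : ‖K‖ = q := by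
    have hcr : c = ((-(1 - lam) / 2 : ℝ) : ℂ) := by rw [hc]; push_cast; ring
    rw [hK, norm_mul, norm_neg, hcr, Complex.norm_real, RCLike.norm_conj,
      hζ, mul_one, Real.norm_eq_abs, abs_of_neg (by linarith : -(1 - lam) / 2 < 0), hq]
    ring
  -- eventual membership
  have hev : ∀ᶠ r : ℝ in l, r ∈ Ioo (0:ℝ) 1 :=
    Ioo_mem_nhdsLT_of_mem (by norm_num : (1:ℝ) ∈ Ioc (0:ℝ) 1)
  -- continuity of the derivative formula at w
  set G : ℂ → ℂ := fun z => c * (1 - (starRingEnd ℂ) ζ * z) ^ (c - 1) * (-(starRingEnd ℂ) ζ)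
    with hG
  have hwa : ‖w‖ < 1 := by
    rw [← mem_ball_zero_iff]; exact hw
  have hGc : ContinuousAt G w := by
    have h1 : ContinuousAt (fun z : ℂ => 1 - (starRingEnd ℂ) ζ * z) w :=
      (continuous_const.sub (continuous_const.mul continuous_id)).continuousAt
    have h2 : ContinuousAt (fun x : ℂ => x ^ (c - 1)) (1 - (starRingEnd ℂ) ζ * w) :=
      HasDerivAt.continuousAt (HasStrictDerivAt.hasDerivAt (Complex.hasStrictDerivAt_cpow_const (hslit w hwa)))
    have h3 : ContinuousAt (fun z : ℂ => (1 - (starRingEnd ℂ) ζ * z) ^ (c - 1)) w :=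
      ContinuousAt.comp (g := fun x : ℂ => x ^ (c - 1))
        (f := fun z : ℂ => 1 - (starRingEnd ℂ) ζ * z) h2 h1
    exact (continuousAt_const.mul h3).mul continuousAt_const
  -- deriv fζ (φ (rζ)) tends to G w
  have hdfφ : Tendsto (fun r : ℝ => deriv fζ (φ ((r : ℂ) * ζ))) l (nhds (G w)) := by
    have h1 : Tendsto (fun r : ℝ => G (φ ((r : ℂ) * ζ))) l (nhds (G w)) :=
      hGc.tendsto.comp hlim
    refine h1.congr' ?_
    filter_upwards [hev] with r hr
    have hφz : φ ((r : ℂ) * ζ) ∈ ball (0:ℂ) 1 := hφmaps (hball r hr)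
    have hφa : ‖φ ((r : ℂ) * ζ)‖ < 1 := by
      rw [← mem_ball_zero_iff]; exact hφz
    exact ((hD _ (hslit _ hφa)).deriv).symm
  -- (1-r)^q → 0
  have h1r : Tendsto (fun r : ℝ => 1 - r) l (nhds 0) := by
    have h : Tendsto (fun r : ℝ => 1 - r) (nhds 1) (nhds (1 - 1)) :=
      Continuous.tendsto (by continuity) 1
    norm_num at h
    exact h.mono_left nhdsWithin_le_nhds
  have hrq : Tendsto (fun r : ℝ => (1 - r) ^ q) l (nhds 0) := by
    have h2 : ContinuousAt (fun x : ℝ => x ^ q) 0 :=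
      Real.continuousAt_rpow_const 0 q (Or.inr hq0.le)
    have h3 := h2.tendsto.comp h1r
    simpa [Function.comp_def, Real.zero_rpow hq0.ne'] using h3
  -- the "moving" term tends to 0
  have hA : Tendsto (fun r : ℝ =>
      (((1 - r) ^ p : ℝ) : ℂ) * deriv fζ (φ ((r : ℂ) * ζ)) * deriv φ ((r : ℂ) * ζ)) l
      (nhds 0) := by
    rw [tendsto_zero_iff_norm_tendsto_zero]
    refine squeeze_zero' (Eventually.of_forall fun r => norm_nonneg _) ?_ ?_
      (g := fun r : ℝ => ((1 - r) ^ q * ‖deriv fζ (φ ((r : ℂ) * ζ))‖) *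
        ((1 - r) * ‖deriv φ ((r : ℂ) * ζ)‖))
    · filter_upwards [hev] with r hr
      have h0 : (0:ℝ) < 1 - r := by linarith [hr.2]
      have hsplit : (1 - r) ^ p = (1 - r) ^ q * (1 - r) := by
        have : p = q + 1 := by rw [hp, hq]; ring
        rw [this, Real.rpow_add h0, Real.rpow_one]
      rw [norm_mul, norm_mul, Complex.norm_real, Real.norm_eq_abs,
        _root_.abs_of_nonneg (Real.rpow_nonneg h0.le p), hsplit]
      exact le_of_eq (by ring)
    · have := (hrq.mul hdfφ.norm).mul hder
      simpa using this
  -- main limit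
  have T : Tendsto (fun r : ℝ => (1 - r) ^ p *
      ‖deriv fζ (φ ((r : ℂ) * ζ)) * deriv φ ((r : ℂ) * ζ) - deriv fζ ((r : ℂ) * ζ)‖) l
      (nhds q) := by
    have h1 : Tendsto (fun r : ℝ =>
        ‖(((1 - r) ^ p : ℝ) : ℂ) * deriv fζ (φ ((r : ℂ) * ζ)) * deriv φ ((r : ℂ) * ζ) - K‖) l
        (nhds q) := by
      have := (hA.sub_const K).norm
      simpa [hKnorm] using this
    refine h1.congr' ?_
    filter_upwards [hev] with r hr
    have h0 : (0:ℝ) < 1 - r := by linarith [hr.2]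
    have heq : (((1 - r) ^ p : ℝ) : ℂ) *
        (deriv fζ (φ ((r : ℂ) * ζ)) * deriv φ ((r : ℂ) * ζ) - deriv fζ ((r : ℂ) * ζ)) =
        (((1 - r) ^ p : ℝ) : ℂ) * deriv fζ (φ ((r : ℂ) * ζ)) * deriv φ ((r : ℂ) * ζ) - K := by
      rw [mul_sub, hdf r hr.2, hcan r hr]; ring
    calc ‖(((1 - r) ^ p : ℝ) : ℂ) * deriv fζ (φ ((r : ℂ) * ζ)) * deriv φ ((r : ℂ) * ζ) - K‖
        = ‖(((1 - r) ^ p : ℝ) : ℂ) *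
          (deriv fζ (φ ((r : ℂ) * ζ)) * deriv φ ((r : ℂ) * ζ) - deriv fζ ((r : ℂ) * ζ))‖ := by
          rw [heq]
      _ = (1 - r) ^ p *
          ‖deriv fζ (φ ((r : ℂ) * ζ)) * deriv φ ((r : ℂ) * ζ) - deriv fζ ((r : ℂ) * ζ)‖ := by
          rw [norm_mul, Complex.norm_real, Real.norm_eq_abs,
            _root_.abs_of_nonneg (Real.rpow_nonneg h0.le p)]
  -- Part 1
  have part1 : ∀ ε > 0, ∃ᶠ r : ℝ in l,
      q - ε < (1 - r) ^ p *
        ‖deriv fζ (φ ((r : ℂ) * ζ)) * deriv φ ((r : ℂ) * ζ) - deriv fζ ((r : ℂ) * ζ)‖ := by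
    intro ε hε
    exact (T.eventually (eventually_gt_nhds (by linarith : q - ε < q))).frequently
  refine ⟨part1, ?_⟩
  -- Part 2
  set g : ℂ → ℂ := fζ ∘ φ - fζ with hg
  have hS : ENNReal.ofReal q ≤
      ⨆ z ∈ ball (0:ℂ) 1, ENNReal.ofReal ((1 - ‖z‖ ^ 2) ^ p * ‖deriv g z‖) := by
    refine le_of_forall_lt fun b hb => ?_
    have hbt : b ≠ ⊤ := (hb.trans_le le_top).ne
    have hblt : b.toReal < q := by
      rw [← ENNReal.ofReal_toReal hbt] at hb
      exact (ENNReal.ofReal_lt_ofReal_iff hq0).mp hb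
    obtain ⟨r, hrN, hrI⟩ := ((part1 (q - b.toReal) (by linarith)).and_eventually hev).exists
    have hbr : b.toReal < (1 - r) ^ p *
        ‖deriv fζ (φ ((r : ℂ) * ζ)) * deriv φ ((r : ℂ) * ζ) - deriv fζ ((r : ℂ) * ζ)‖ := by
      linarith [hrN]
    have hz : (r : ℂ) * ζ ∈ ball (0:ℂ) 1 := hball r hrI
    have hφz : φ ((r : ℂ) * ζ) ∈ ball (0:ℂ) 1 := hφmaps hz
    have hφa : ‖φ ((r : ℂ) * ζ)‖ < 1 := by
      rw [← mem_ball_zero_iff]; exact hφz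
    -- the derivative of g at rζ
    have hDφ : HasDerivAt φ (deriv φ ((r : ℂ) * ζ)) ((r : ℂ) * ζ) :=
      (hφhol.differentiableAt (isOpen_ball.mem_nhds hz)).hasDerivAt
    have hD1 : HasDerivAt fζ (deriv fζ (φ ((r : ℂ) * ζ))) (φ ((r : ℂ) * ζ)) :=
      (hD _ (hslit _ hφa)).differentiableAt.hasDerivAt
    have hD2 : HasDerivAt fζ (deriv fζ ((r : ℂ) * ζ)) ((r : ℂ) * ζ) :=
      (hD _ (hslitr r hrI.2)).differentiableAt.hasDerivAt
    have hcomp : HasDerivAt g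
        (deriv fζ (φ ((r : ℂ) * ζ)) * deriv φ ((r : ℂ) * ζ) - deriv fζ ((r : ℂ) * ζ))
        ((r : ℂ) * ζ) := (hD1.comp _ hDφ).sub hD2
    have hderivg : deriv g ((r : ℂ) * ζ) =
        deriv fζ (φ ((r : ℂ) * ζ)) * deriv φ ((r : ℂ) * ζ) - deriv fζ ((r : ℂ) * ζ) :=
      hcomp.deriv
    have habs : ‖(r : ℂ) * ζ‖ = r := by
      rw [norm_mul, Complex.norm_real, hζ, mul_one, Real.norm_eq_abs, abs_of_pos hrI.1]
    have hmono : (1 - r) ^ p ≤ (1 - r ^ 2) ^ p := by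
      refine Real.rpow_le_rpow (by linarith [hrI.2]) ?_ hp0.le
      nlinarith [hrI.1, hrI.2]
    have hterm : b.toReal <
        (1 - ‖(r : ℂ) * ζ‖ ^ 2) ^ p * ‖deriv g ((r : ℂ) * ζ)‖ := by
      rw [habs, hderivg]
      calc b.toReal < (1 - r) ^ p *
          ‖deriv fζ (φ ((r : ℂ) * ζ)) * deriv φ ((r : ℂ) * ζ) - deriv fζ ((r : ℂ) * ζ)‖ := hbr
        _ ≤ (1 - r ^ 2) ^ p *
          ‖deriv fζ (φ ((r : ℂ) * ζ)) * deriv φ ((r : ℂ) * ζ) - deriv fζ ((r : ℂ) * ζ)‖ :=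
          mul_le_mul_of_nonneg_right hmono (norm_nonneg _)
    have hpos : 0 < (1 - ‖(r : ℂ) * ζ‖ ^ 2) ^ p * ‖deriv g ((r : ℂ) * ζ)‖ :=
      lt_of_le_of_lt ENNReal.toReal_nonneg hterm
    calc b = ENNReal.ofReal b.toReal := (ENNReal.ofReal_toReal hbt).symm
      _ < ENNReal.ofReal ((1 - ‖(r : ℂ) * ζ‖ ^ 2) ^ p * ‖deriv g ((r : ℂ) * ζ)‖) :=
        (ENNReal.ofReal_lt_ofReal_iff hpos).mpr hterm
      _ ≤ ⨆ z ∈ ball (0:ℂ) 1, ENNReal.ofReal ((1 - ‖z‖ ^ 2) ^ p * ‖deriv g z‖) :=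
        le_iSup₂ (f := fun z (_ : z ∈ ball (0:ℂ) 1) =>
          ENNReal.ofReal ((1 - ‖z‖ ^ 2) ^ p * ‖deriv g z‖)) ((r : ℂ) * ζ) hz
  calc ENNReal.ofReal q ≤
      ⨆ z ∈ ball (0:ℂ) 1, ENNReal.ofReal ((1 - ‖z‖ ^ 2) ^ p * ‖deriv g z‖) := hS
    _ ≤ blochNormE p g := le_add_self

end
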